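/- Let S = {(A_i, B_i)}_{i ∈ I} be a 1-cross intersecting set pair system, and suppose there exist i ≠ j in I with |A_i| = |A_j| = 2, A_i ∩ A_j ≠ ∅, |B_i| = |B_j| = 2, and B_i ∩ B_j ≠ ∅. Then ∑_{k ∈ I} 1 / C(|A_k| + |B_k|, |A_k|) ≤ 5/6. -/

import Mathlib

lemma up_both (n k : ℕ) : (n + 1).choose (k + 1) * (k + 1) = (n + 1) * n.choose k := by
  have h := Nat.add_one_mul_choose_eq n k
  linarith [h]

lemma up_n (n k : ℕ) : (n + 1).choose k * (n + 1 - k) = n.choose k * (n + 1) :=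
  (Nat.choose_mul_succ_eq n k).symm

lemma M2 (s t : ℕ) :
    (s + 1) * (t + 1) * (s + t + 2).choose (s + 1)
      = (s + t + 1) * (s + t + 2) * (s + t).choose s := by
  have h1 : (s + t + 2).choose (s + 1) * (s + 1) = (s + t + 2) * (s + t + 1).choose s := by
    have h := up_both (s + t + 1) s; norm_num at h; linarith [h]
  have h2 : (s + t + 1).choose s * (t + 1) = (s + t).choose s * (s + t + 1) := by
    have h := up_n (s + t) s
    have e : s + t + 1 - s = t + 1 := by omega
    rw [e] at h; linarith [h]
  calc (s + 1) * (t + 1) * (s + t + 2).choose (s + 1)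
      = (t + 1) * ((s + t + 2).choose (s + 1) * (s + 1)) := by ring
    _ = (t + 1) * ((s + t + 2) * (s + t + 1).choose s) := by rw [h1]
    _ = (s + t + 2) * ((s + t + 1).choose s * (t + 1)) := by ring
    _ = (s + t + 2) * ((s + t).choose s * (s + t + 1)) := by rw [h2]
    _ = (s + t + 1) * (s + t + 2) * (s + t).choose s := by ring

lemma M3 (s t : ℕ) :
    (s + 1) * ((t + 1) * (t + 2)) * (s + t + 3).choose (s + 1)
      = (s + t + 1) * (s + t + 2) * (s + t + 3) * (s + t).choose s := by
  have h1 : (s + t + 3).choose (s + 1) * (s + 1) = (s + t + 3) * (s + t + 2).choose s := by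
    have h := up_both (s + t + 2) s; norm_num at h; linarith [h]
  have h2 : (s + t + 2).choose s * (t + 2) = (s + t + 1).choose s * (s + t + 2) := by
    have h := up_n (s + t + 1) s
    have e : s + t + 1 + 1 - s = t + 2 := by omega
    rw [e] at h; norm_num at h; linarith [h]
  have h3 : (s + t + 1).choose s * (t + 1) = (s + t).choose s * (s + t + 1) := by
    have h := up_n (s + t) s
    have e : s + t + 1 - s = t + 1 := by omega
    rw [e] at h; linarith [h]
  calc (s + 1) * ((t + 1) * (t + 2)) * (s + t + 3).choose (s + 1)
      = (t + 1) * (t + 2) * ((s + t + 3).choose (s + 1) * (s + 1)) := by ring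
    _ = (t + 1) * (t + 2) * ((s + t + 3) * (s + t + 2).choose s) := by rw [h1]
    _ = (t + 1) * (s + t + 3) * ((s + t + 2).choose s * (t + 2)) := by ring
    _ = (t + 1) * (s + t + 3) * ((s + t + 1).choose s * (s + t + 2)) := by rw [h2]
    _ = (s + t + 3) * (s + t + 2) * ((s + t + 1).choose s * (t + 1)) := by ring
    _ = (s + t + 3) * (s + t + 2) * ((s + t).choose s * (s + t + 1)) := by rw [h3]
    _ = (s + t + 1) * (s + t + 2) * (s + t + 3) * (s + t).choose s := by ring

lemma M4 (s t : ℕ) :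
    (s + 2) * ((t + 1) * (t + 2)) * (s + t + 4).choose (s + 2)
      = (s + t + 2) * (s + t + 3) * (s + t + 4) * (s + t + 1).choose (s + 1) := by
  have h1 : (s + t + 4).choose (s + 2) * (s + 2) = (s + t + 4) * (s + t + 3).choose (s + 1) := by
    have h := up_both (s + t + 3) (s + 1); norm_num at h; linarith [h]
  have h2 : (s + t + 3).choose (s + 1) * (t + 2) = (s + t + 2).choose (s + 1) * (s + t + 3) := by
    have h := up_n (s + t + 2) (s + 1)
    have e : s + t + 2 + 1 - (s + 1) = t + 2 := by omega
    rw [e] at h; norm_num at h; linarith [h]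
  have h3 : (s + t + 2).choose (s + 1) * (t + 1) = (s + t + 1).choose (s + 1) * (s + t + 2) := by
    have h := up_n (s + t + 1) (s + 1)
    have e : s + t + 1 + 1 - (s + 1) = t + 1 := by omega
    rw [e] at h; norm_num at h; linarith [h]
  calc (s + 2) * ((t + 1) * (t + 2)) * (s + t + 4).choose (s + 2)
      = (t + 1) * (t + 2) * ((s + t + 4).choose (s + 2) * (s + 2)) := by ring
    _ = (t + 1) * (t + 2) * ((s + t + 4) * (s + t + 3).choose (s + 1)) := by rw [h1]
    _ = (t + 1) * (s + t + 4) * ((s + t + 3).choose (s + 1) * (t + 2)) := by ring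
    _ = (t + 1) * (s + t + 4) * ((s + t + 2).choose (s + 1) * (s + t + 3)) := by rw [h2]
    _ = (s + t + 4) * (s + t + 3) * ((s + t + 2).choose (s + 1) * (t + 1)) := by ring
    _ = (s + t + 4) * (s + t + 3) * ((s + t + 1).choose (s + 1) * (s + t + 2)) := by rw [h3]
    _ = (s + t + 2) * (s + t + 3) * (s + t + 4) * (s + t + 1).choose (s + 1) := by ring

lemma R2 (s t : ℕ) : 2 * (s + t).choose s ≤ (s + t + 2).choose (s + 1) := by
  have hM := M2 s t
  have hpoly : 2 * ((s + 1) * (t + 1)) ≤ (s + t + 1) * (s + t + 2) := by nlinarith [sq_nonneg s, sq_nonneg t]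
  refine Nat.le_of_mul_le_mul_left ?_ (show 0 < (s + 1) * (t + 1) by positivity)
  calc (s + 1) * (t + 1) * (2 * (s + t).choose s)
      = (2 * ((s + 1) * (t + 1))) * (s + t).choose s := by ring
    _ ≤ ((s + t + 1) * (s + t + 2)) * (s + t).choose s := Nat.mul_le_mul_right _ hpoly
    _ = (s + t + 1) * (s + t + 2) * (s + t).choose s := by ring
    _ = (s + 1) * (t + 1) * (s + t + 2).choose (s + 1) := hM.symm

lemma R3 (s t : ℕ) (hs : 1 ≤ s) : 3 * (s + t).choose s ≤ (s + t + 2).choose (s + 1) := by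
  have hM := M2 s t
  have hpoly : 3 * ((s + 1) * (t + 1)) ≤ (s + t + 1) * (s + t + 2) := by
    rcases Nat.eq_zero_or_pos t with ht | ht
    · subst ht; nlinarith
    · zify
      have h1 : (1:ℤ) ≤ (s:ℤ) * t := by
        have := Nat.mul_le_mul hs ht; zify at this; linarith
      nlinarith [sq_nonneg ((s:ℤ) - t), h1]
  refine Nat.le_of_mul_le_mul_left ?_ (show 0 < (s + 1) * (t + 1) by positivity)
  calc (s + 1) * (t + 1) * (3 * (s + t).choose s)
      = (3 * ((s + 1) * (t + 1))) * (s + t).choose s := by ring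
    _ ≤ ((s + t + 1) * (s + t + 2)) * (s + t).choose s := Nat.mul_le_mul_right _ hpoly
    _ = (s + t + 1) * (s + t + 2) * (s + t).choose s := by ring
    _ = (s + 1) * (t + 1) * (s + t + 2).choose (s + 1) := hM.symm

lemma R3' (s t : ℕ) : 3 * (s + t).choose s ≤ (s + t + 3).choose (s + 1) := by
  have hM := M3 s t
  have hpoly : 3 * ((s + 1) * ((t + 1) * (t + 2))) ≤ (s + t + 1) * (s + t + 2) * (s + t + 3) := by
    nlinarith [sq_nonneg s, sq_nonneg t, Nat.zero_le (s * t)]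
  refine Nat.le_of_mul_le_mul_left ?_ (show 0 < (s + 1) * ((t + 1) * (t + 2)) by positivity)
  calc (s + 1) * ((t + 1) * (t + 2)) * (3 * (s + t).choose s)
      = (3 * ((s + 1) * ((t + 1) * (t + 2)))) * (s + t).choose s := by ring
    _ ≤ ((s + t + 1) * (s + t + 2) * (s + t + 3)) * (s + t).choose s := Nat.mul_le_mul_right _ hpoly
    _ = (s + t + 1) * (s + t + 2) * (s + t + 3) * (s + t).choose s := by ring
    _ = (s + 1) * ((t + 1) * (t + 2)) * (s + t + 3).choose (s + 1) := hM.symm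

lemma R4 (s t : ℕ) : 4 * (s + t + 1).choose (s + 1) ≤ (s + t + 4).choose (s + 2) := by
  have hM := M4 s t
  have hpoly : 4 * ((s + 2) * ((t + 1) * (t + 2))) ≤ (s + t + 2) * (s + t + 3) * (s + t + 4) := by
    zify
    nlinarith [mul_nonneg (Int.ofNat_nonneg t) (sq_nonneg ((s : ℤ) - t)),
      Int.ofNat_nonneg s, Int.ofNat_nonneg t,
      mul_nonneg (mul_nonneg (Int.ofNat_nonneg s) (Int.ofNat_nonneg s)) (Int.ofNat_nonneg t),
      mul_nonneg (mul_nonneg (Int.ofNat_nonneg s) (Int.ofNat_nonneg t)) (Int.ofNat_nonneg t),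
      mul_nonneg (Int.ofNat_nonneg s) (Int.ofNat_nonneg t)]
  refine Nat.le_of_mul_le_mul_left ?_ (show 0 < (s + 2) * ((t + 1) * (t + 2)) by positivity)
  calc (s + 2) * ((t + 1) * (t + 2)) * (4 * (s + t + 1).choose (s + 1))
      = (4 * ((s + 2) * ((t + 1) * (t + 2)))) * (s + t + 1).choose (s + 1) := by ring
    _ ≤ ((s + t + 2) * (s + t + 3) * (s + t + 4)) * (s + t + 1).choose (s + 1) :=
        Nat.mul_le_mul_right _ hpoly
    _ = (s + t + 2) * (s + t + 3) * (s + t + 4) * (s + t + 1).choose (s + 1) := by ring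
    _ = (s + 2) * ((t + 1) * (t + 2)) * (s + t + 4).choose (s + 2) := hM.symm

open Finset

lemma boll_aux {α : Type*} {ι : Type*} [DecidableEq α] (n : ℕ) :
    ∀ (U : Finset α) (K : Finset ι) (C D : ι → Finset α),
    U.card = n →
    (∀ k ∈ K, C k ∪ D k ⊆ U) →
    (∀ k ∈ K, C k ∩ D k = ∅) →
    (∀ k ∈ K, ∀ l ∈ K, k ≠ l → (C k ∩ D l).Nonempty) →
    ∑ k ∈ K, (1 : ℚ) / (((C k).card + (D k).card).choose (C k).card) ≤ 1 := by
  induction n with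
  | zero =>
    intro U K C D hcard hsub hdisj hcross
    rcases K.eq_empty_or_nonempty with rfl | ⟨k₀, hk₀⟩
    · simp
    have hU : U = ∅ := card_eq_zero.mp hcard
    have hsingle : K = {k₀} := by
      apply Finset.eq_singleton_iff_unique_mem.mpr
      refine ⟨hk₀, fun l hl => ?_⟩
      by_contra hne
      obtain ⟨w, hw⟩ := hcross l hl k₀ hk₀ hne
      have : w ∈ U := hsub l hl (mem_union_left _ (mem_inter.mp hw).1)
      simp [hU] at this
    subst hsingle
    rw [Finset.sum_singleton]
    have hC : C k₀ = ∅ := by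
      rw [← Finset.subset_empty, ← hU]
      exact fun w hw => hsub k₀ (mem_singleton_self _) (mem_union_left _ hw)
    have hD : D k₀ = ∅ := by
      rw [← Finset.subset_empty, ← hU]
      exact fun w hw => hsub k₀ (mem_singleton_self _) (mem_union_right _ hw)
    simp [hC, hD]
  | succ n ih =>
    intro U K C D hcard hsub hdisj hcross
    by_cases hCne : ∀ k ∈ K, (C k).Nonempty
    · -- main case
      have hU : U.Nonempty := card_pos.mp (by omega)
      -- the key per-element bound from induction hypothesis
      have key : ∀ u ∈ U,
          ∑ k ∈ K.filter (fun k => u ∉ D k),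
            (1 : ℚ) / ((((C k).erase u).card + (D k).card).choose ((C k).erase u).card) ≤ 1 := by
        intro u hu
        apply ih (U.erase u) _ (fun k => (C k).erase u) D
        · rw [card_erase_of_mem hu, hcard]; rfl
        · intro k hk
          rw [mem_filter] at hk
          intro w hw
          rw [mem_union] at hw
          rcases hw with hw | hw
          · rw [mem_erase] at hw ⊢
            exact ⟨hw.1, hsub k hk.1 (mem_union_left _ hw.2)⟩
          · rw [mem_erase]
            refine ⟨fun he => hk.2 (he ▸ hw), hsub k hk.1 (mem_union_right _ hw)⟩
        · intro k hk
          rw [mem_filter] at hk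
          rw [← Finset.subset_empty, ← hdisj k hk.1]
          exact inter_subset_inter (erase_subset _ _) Subset.rfl
        · intro k hk l hl hne
          rw [mem_filter] at hk hl
          obtain ⟨w, hw⟩ := hcross k hk.1 l hl.1 hne
          rw [mem_inter] at hw
          exact ⟨w, mem_inter.mpr ⟨mem_erase.mpr ⟨fun he => hl.2 (he ▸ hw.2), hw.1⟩, hw.2⟩⟩
      classical
      set F : ι → α → ℚ := fun k u =>
        (1 : ℚ) / ((((C k).erase u).card + (D k).card).choose ((C k).erase u).card) with hF
      set p : ι → ℚ := fun k =>
        (1 : ℚ) / (((C k).card + (D k).card).choose (C k).card) with hp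
      set q : ι → ℚ := fun k =>
        (1 : ℚ) / ((((C k).card - 1) + (D k).card).choose ((C k).card - 1)) with hq
      have total : ∑ u ∈ U, ∑ k ∈ K.filter (fun k => u ∉ D k), F k u ≤ (n + 1 : ℚ) := by
        calc ∑ u ∈ U, ∑ k ∈ K.filter (fun k => u ∉ D k), F k u ≤ ∑ _u ∈ U, (1:ℚ) :=
            Finset.sum_le_sum (fun u hu => key u hu)
          _ = (U.card : ℚ) := by rw [Finset.sum_const]; simp
          _ = (n + 1 : ℚ) := by rw [hcard]; push_cast; ring
      have swap : ∑ u ∈ U, ∑ k ∈ K.filter (fun k => u ∉ D k), F k u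
          = ∑ k ∈ K, ∑ u ∈ U, if u ∉ D k then F k u else 0 := by
        have h1 : ∀ u, ∑ k ∈ K.filter (fun k => u ∉ D k), F k u
            = ∑ k ∈ K, if u ∉ D k then F k u else 0 := fun u => Finset.sum_filter _ _
        simp_rw [h1]
        exact Finset.sum_comm
      have inner_eq : ∀ k ∈ K, ∑ u ∈ U, (if u ∉ D k then F k u else 0)
          = (((U \ D k) \ C k).card : ℚ) * p k + ((C k).card : ℚ) * q k := by
        intro k hk
        have hDsub : D k ⊆ U := fun w hw => hsub k hk (mem_union_right _ hw)
        have hCsub : C k ⊆ U \ D k := by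
          intro w hw
          rw [mem_sdiff]
          refine ⟨hsub k hk (mem_union_left _ hw), fun hd => ?_⟩
          have : w ∈ C k ∩ D k := mem_inter.mpr ⟨hw, hd⟩
          rw [hdisj k hk] at this
          exact absurd this (notMem_empty w)
        rw [← Finset.sum_filter]
        have hfilter : U.filter (fun u => u ∉ D k) = U \ D k := (Finset.sdiff_eq_filter U (D k)).symm
        rw [hfilter, ← Finset.sum_sdiff hCsub]
        have e1 : ∑ u ∈ (U \ D k) \ C k, F k u = (((U \ D k) \ C k).card : ℚ) * p k := by
          rw [Finset.sum_congr rfl (fun u hu => ?_), Finset.sum_const, nsmul_eq_mul]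
          rw [mem_sdiff] at hu
          show F k u = p k
          rw [hF, hp]
          simp only []
          rw [Finset.erase_eq_of_notMem hu.2]
        have e2 : ∑ u ∈ C k, F k u = ((C k).card : ℚ) * q k := by
          rw [Finset.sum_congr rfl (fun u hu => ?_), Finset.sum_const, nsmul_eq_mul]
          show F k u = q k
          rw [hF, hq]
          simp only []
          rw [Finset.card_erase_of_mem hu]
        rw [e1, e2]
      have maink : ∀ k ∈ K, (n + 1 : ℚ) * p k
          ≤ (((U \ D k) \ C k).card : ℚ) * p k + ((C k).card : ℚ) * q k := by
        intro k hk
        obtain ⟨a', ha'⟩ : ∃ a', (C k).card = a' + 1 :=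
          ⟨(C k).card - 1, (Nat.succ_pred_eq_of_pos (card_pos.mpr (hCne k hk))).symm⟩
        set b := (D k).card with hb
        have hDsub : D k ⊆ U := fun w hw => hsub k hk (mem_union_right _ hw)
        have hCsub : C k ⊆ U \ D k := by
          intro w hw
          rw [mem_sdiff]
          refine ⟨hsub k hk (mem_union_left _ hw), fun hd => ?_⟩
          have : w ∈ C k ∩ D k := mem_inter.mpr ⟨hw, hd⟩
          rw [hdisj k hk] at this
          exact absurd this (notMem_empty w)
        have hcardm : ((U \ D k) \ C k).card = n + 1 - b - (a' + 1) := by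
          rw [card_sdiff_of_subset hCsub, card_sdiff_of_subset hDsub, hcard, ha']
        have hab_le : (a' + 1) + b ≤ n + 1 := by
          have h1 : (C k ∪ D k).card ≤ n + 1 := hcard ▸ card_le_card (hsub k hk)
          have h2 : (C k ∪ D k).card = (a' + 1) + b := by
            rw [card_union_of_disjoint, ha']
            exact disjoint_iff_inter_eq_empty.mpr (hdisj k hk)
          omega
        have hmcast : ((((U \ D k) \ C k).card : ℚ)) = (n + 1 : ℚ) - b - (a' + 1) := by
          rw [hcardm, Nat.cast_sub (by omega), Nat.cast_sub (by omega)]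
          push_cast
          ring
        have hCb : 0 < ((a' + 1) + b).choose (a' + 1) := Nat.choose_pos (by omega)
        have hCs : 0 < (a' + b).choose a' := Nat.choose_pos (by omega)
        have hid : (a' + 1 + b) * (a' + b).choose a' = (a' + 1) * ((a' + 1) + b).choose (a' + 1) := by
          have h := up_both (a' + b) a'
          have e : a' + b + 1 = a' + 1 + b := by omega
          rw [e] at h
          linarith [h]
        have core : (a' + 1 + b : ℚ) * p k ≤ (a' + 1 : ℚ) * q k := by
          rw [hp, hq]
          simp only []
          rw [ha']
          have e : a' + 1 - 1 = a' := by omega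
          rw [e]
          rw [mul_one_div, mul_one_div]
          rw [div_le_div_iff₀ (by exact_mod_cast hCb) (by exact_mod_cast hCs)]
          push_cast
          exact_mod_cast le_of_eq (by exact_mod_cast hid)
        rw [hmcast, ha']
        push_cast
        push_cast at core
        nlinarith [core]
      -- final assembly
      have step : (n + 1 : ℚ) * ∑ k ∈ K, p k ≤ (n + 1 : ℚ) := by
        calc (n + 1 : ℚ) * ∑ k ∈ K, p k = ∑ k ∈ K, (n + 1 : ℚ) * p k := Finset.mul_sum _ _ _
          _ ≤ ∑ k ∈ K, ((((U \ D k) \ C k).card : ℚ) * p k + ((C k).card : ℚ) * q k) :=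
              Finset.sum_le_sum maink
          _ = ∑ k ∈ K, ∑ u ∈ U, (if u ∉ D k then F k u else 0) :=
              (Finset.sum_congr rfl (fun k hk => (inner_eq k hk).symm))
          _ = ∑ u ∈ U, ∑ k ∈ K.filter (fun k => u ∉ D k), F k u := swap.symm
          _ ≤ (n + 1 : ℚ) := total
      have hpos : (0:ℚ) < (n + 1 : ℚ) := by positivity
      calc ∑ k ∈ K, (1 : ℚ) / (((C k).card + (D k).card).choose (C k).card) = ∑ k ∈ K, p k := rfl
        _ ≤ 1 := by
            by_contra hgt
            push_neg at hgt
            have := mul_lt_mul_of_pos_left hgt hpos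
            rw [mul_one] at this
            linarith [step]
    · -- some C k is empty : K is a singleton
      push_neg at hCne
      obtain ⟨k₀, hk₀, hCk₀⟩ := hCne
      have hsingle : K = {k₀} := by
        apply Finset.eq_singleton_iff_unique_mem.mpr
        refine ⟨hk₀, fun l hl => ?_⟩
        by_contra hne
        obtain ⟨w, hw⟩ := hcross k₀ hk₀ l hl (fun h => hne h.symm)
        rw [mem_inter, hCk₀] at hw
        exact absurd hw.1 (notMem_empty w)
      subst hsingle
      rw [Finset.sum_singleton, hCk₀]
      simp

lemma boll {α : Type*} {ι : Type*} [DecidableEq α] (K : Finset ι) (C D : ι → Finset α)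
    (hdisj : ∀ k ∈ K, C k ∩ D k = ∅)
    (hcross : ∀ k ∈ K, ∀ l ∈ K, k ≠ l → (C k ∩ D l).Nonempty) :
    ∑ k ∈ K, (1 : ℚ) / (((C k).card + (D k).card).choose (C k).card) ≤ 1 :=
  boll_aux (K.biUnion (fun k => C k ∪ D k)).card (K.biUnion (fun k => C k ∪ D k)) K C D rfl
    (fun k hk => subset_biUnion_of_mem (fun k => C k ∪ D k) hk) hdisj hcross

lemma term_ratio (m : ℕ) (hm : 0 < m) {cs cb : ℕ} (hcs : 0 < cs) (h : m * cs ≤ cb) :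
    (1 : ℚ) / cb ≤ 1 / m * (1 / cs) := by
  rw [one_div_mul_one_div]
  apply one_div_le_one_div_of_le
  · exact_mod_cast Nat.mul_pos hm hcs
  · exact_mod_cast h

lemma pair_card_one {α : Type*} [DecidableEq α] {S : Finset α} {u v : α} (huv : u ≠ v)
    (h : (S ∩ {u, v}).card = 1) : (u ∈ S ∧ v ∉ S) ∨ (v ∈ S ∧ u ∉ S) := by
  by_cases hu : u ∈ S <;> by_cases hv : v ∈ S
  · exfalso
    have hsub : ({u, v} : Finset α) ⊆ S ∩ {u, v} := by
      intro w hw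
      rcases Finset.mem_insert.mp hw with rfl | hw
      · exact mem_inter.mpr ⟨hu, Finset.mem_insert_self _ _⟩
      · rw [Finset.mem_singleton] at hw
        subst hw
        exact mem_inter.mpr ⟨hv, Finset.mem_insert_of_mem (Finset.mem_singleton_self _)⟩
    have := Finset.card_le_card hsub
    rw [Finset.card_pair huv, h] at this
    omega
  · exact Or.inl ⟨hu, hv⟩
  · exact Or.inr ⟨hv, hu⟩
  · exfalso
    have : S ∩ {u, v} = ∅ := by
      apply Finset.eq_empty_of_forall_notMem
      intro w hw
      rw [mem_inter] at hw
      rcases Finset.mem_insert.mp hw.2 with rfl | hw2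
      · exact hu hw.1
      · rw [Finset.mem_singleton] at hw2
        subst hw2
        exact hv hw.1
    rw [this] at h
    simp at h

lemma pair_mem_other {α : Type*} [DecidableEq α] {S : Finset α} {a : α}
    (h2 : S.card = 2) (ha : a ∈ S) : ∃ x, x ≠ a ∧ S = {a, x} := by
  obtain ⟨u, v, huv, rfl⟩ := Finset.card_eq_two.mp h2
  rcases Finset.mem_insert.mp ha with rfl | hv
  · exact ⟨v, fun h => huv h.symm, rfl⟩
  · rw [Finset.mem_singleton] at hv
    subst hv
    exact ⟨u, fun h => huv h, Finset.pair_comm u a⟩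

lemma eq_pair_of_mem {α : Type*} [DecidableEq α] {S : Finset α} {u v : α}
    (h2 : S.card = 2) (hu : u ∈ S) (hv : v ∈ S) (huv : u ≠ v) : S = {u, v} := by
  have hsub : ({u, v} : Finset α) ⊆ S := by
    intro w hw
    rcases Finset.mem_insert.mp hw with rfl | hw
    · exact hu
    · rw [Finset.mem_singleton] at hw; subst hw; exact hv
  exact (Finset.eq_of_subset_of_card_le hsub (by rw [h2, Finset.card_pair huv])).symm
lemma key_half {α : Type*} {ι : Type*} [DecidableEq α] [DecidableEq ι] (I : Finset ι) (A B : ι → Finset α)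
    (i j : ι) (a x y b : α)
    (hdisj : ∀ k ∈ I, A k ∩ B k = ∅)
    (hone : ∀ k ∈ I, ∀ l ∈ I, k ≠ l → (A k ∩ B l).card = 1)
    (hi : i ∈ I) (hj : j ∈ I)
    (hAi : A i = {a, x}) (hAj : A j = {a, y})
    (hBi : B i = {y, b}) (hBj : B j = {x, b})
    (hax : a ≠ x) (hay : a ≠ y) (hxy : x ≠ y)
    (hab : a ≠ b) (hxb : x ≠ b) (hyb : y ≠ b)
    (hno3 : ∀ k ∈ (I.erase i).erase j, ¬ (x ∈ A k ∧ y ∈ A k)) :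
    ∑ k ∈ (I.erase i).erase j, (1 : ℚ) / (((A k).card + (B k).card).choose (A k).card)
      ≤ 1 / 2 := by
  classical
  set K := (I.erase i).erase j with hK
  have hKI : ∀ k ∈ K, k ∈ I ∧ k ≠ i ∧ k ≠ j := by
    intro k hk
    rw [hK, Finset.mem_erase, Finset.mem_erase] at hk
    exact ⟨hk.2.2, hk.2.1, hk.1⟩
  have hmemAB : ∀ k ∈ I, ∀ w, w ∈ A k → w ∉ B k := by
    intro k hk w hw hw'
    have hmem : w ∈ A k ∩ B k := Finset.mem_inter.mpr ⟨hw, hw'⟩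
    rw [hdisj k hk] at hmem
    exact absurd hmem (Finset.notMem_empty w)
  have hfacts : ∀ k ∈ K, b ∈ A k ∧ x ∉ A k ∧ y ∉ A k ∧ b ∉ B k ∧
      ((x ∈ B k ∧ y ∈ B k ∧ a ∉ B k) ∨ (a ∈ B k ∧ x ∉ B k ∧ y ∉ B k ∧ a ∉ A k)) := by
    intro k hk
    obtain ⟨hkI, hki, hkj⟩ := hKI k hk
    have h1 := hone k hkI i hi hki
    rw [hBi] at h1
    have h2 := hone k hkI j hj hkj
    rw [hBj] at h2
    have h3 := hone i hi k hkI (fun h => hki h.symm)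
    rw [hAi, Finset.inter_comm] at h3
    have h4 := hone j hj k hkI (fun h => hkj h.symm)
    rw [hAj, Finset.inter_comm] at h4
    have c1 := pair_card_one hyb h1
    have c2 := pair_card_one hxb h2
    have c3 := pair_card_one hax h3
    have c4 := pair_card_one hay h4
    have hA : b ∈ A k ∧ x ∉ A k ∧ y ∉ A k := by
      rcases c1 with ⟨hy1, hb1⟩ | ⟨hb1, hy1⟩
      · rcases c2 with ⟨hx2, hb2⟩ | ⟨hb2, hx2⟩
        · exact absurd ⟨hx2, hy1⟩ (hno3 k hk)
        · exact absurd hb2 hb1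
      · rcases c2 with ⟨hx2, hb2⟩ | ⟨hb2, hx2⟩
        · exact absurd hb1 hb2
        · exact ⟨hb1, hx2, hy1⟩
    refine ⟨hA.1, hA.2.1, hA.2.2, hmemAB k hkI b hA.1, ?_⟩
    rcases c3 with ⟨ha3, hx3⟩ | ⟨hx3, ha3⟩
    · rcases c4 with ⟨ha4, hy4⟩ | ⟨hy4, ha4⟩
      · exact Or.inr ⟨ha3, hx3, hy4, fun haA => hmemAB k hkI a haA ha3⟩
      · exact absurd ha3 ha4
    · rcases c4 with ⟨ha4, hy4⟩ | ⟨hy4, ha4⟩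
      · exact absurd ha4 ha3
      · exact Or.inl ⟨hx3, hy4, ha3⟩
  -- from here, case analysis
  by_cases hT2 : ∃ l ∈ K, x ∈ B l
  · by_cases hT1 : ∃ k ∈ K, x ∉ B k
    · -- CASE 3 : both types present
      obtain ⟨l₀, hl₀K, hl₀x⟩ := hT2
      obtain ⟨k₀, hk₀K, hk₀x⟩ := hT1
      -- facts for T1 and T2 members
      have hT1facts : ∀ k ∈ K, x ∉ B k →
          b ∈ A k ∧ x ∉ A k ∧ y ∉ A k ∧ b ∉ B k ∧ a ∈ B k ∧ y ∉ B k ∧ a ∉ A k := by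
        intro k hk hkx
        obtain ⟨hbA, hxA, hyA, hbB, hor⟩ := hfacts k hk
        rcases hor with ⟨hxB, _, _⟩ | ⟨haB, _, hyB, haA⟩
        · exact absurd hxB hkx
        · exact ⟨hbA, hxA, hyA, hbB, haB, hyB, haA⟩
      have hT2facts : ∀ k ∈ K, x ∈ B k →
          b ∈ A k ∧ x ∉ A k ∧ y ∉ A k ∧ b ∉ B k ∧ y ∈ B k ∧ a ∉ B k := by
        intro k hk hkx
        obtain ⟨hbA, hxA, hyA, hbB, hor⟩ := hfacts k hk
        rcases hor with ⟨_, hyB, haB⟩ | ⟨_, hxB, _, _⟩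
        · exact ⟨hbA, hxA, hyA, hbB, hyB, haB⟩
        · exact absurd hkx hxB
      -- erased A is nonempty for all k ∈ K
      have hAerase : ∀ k ∈ K, 1 ≤ ((A k).erase b).card := by
        intro k hk
        by_cases hkx : x ∈ B k
        · -- use k₀
          have hne : k ≠ k₀ := fun h => hk₀x (h ▸ hkx)
          have hcard := hone k (hKI k hk).1 k₀ (hKI k₀ hk₀K).1 hne
          have hne2 : (A k ∩ B k₀).Nonempty := Finset.card_pos.mp (by omega)
          obtain ⟨w, hw⟩ := hne2
          rw [Finset.mem_inter] at hw
          have hwb : w ≠ b := fun h => (hT1facts k₀ hk₀K hk₀x).2.2.2.1 (h ▸ hw.2)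
          refine Finset.card_pos.mpr ⟨w, Finset.mem_erase.mpr ⟨hwb, hw.1⟩⟩
        · -- use l₀
          have hne : k ≠ l₀ := fun h => hkx (h ▸ hl₀x)
          have hcard := hone k (hKI k hk).1 l₀ (hKI l₀ hl₀K).1 hne
          have hne2 : (A k ∩ B l₀).Nonempty := Finset.card_pos.mp (by omega)
          obtain ⟨w, hw⟩ := hne2
          rw [Finset.mem_inter] at hw
          have hwb : w ≠ b := fun h => (hT2facts l₀ hl₀K hl₀x).2.2.2.1 (h ▸ hw.2)
          refine Finset.card_pos.mpr ⟨w, Finset.mem_erase.mpr ⟨hwb, hw.1⟩⟩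
      -- BOLL1: T1 members with fully erased pairs
      set T1f := K.filter (fun k => ¬ (x ∈ B k)) with hT1f
      set T2f := K.filter (fun k => x ∈ B k) with hT2f
      have hT1mem : ∀ k ∈ T1f, k ∈ K ∧ x ∉ B k := by
        intro k hk
        rw [hT1f, Finset.mem_filter] at hk
        exact hk
      have hT2mem : ∀ k ∈ T2f, k ∈ K ∧ x ∈ B k := by
        intro k hk
        rw [hT2f, Finset.mem_filter] at hk
        exact hk
      have boll1 : ∑ k ∈ T1f, (1 : ℚ) /
          ((((A k).erase b).card + ((B k).erase a).card).choose ((A k).erase b).card) ≤ 1 := by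
        apply boll
        · intro k hk
          rw [← Finset.subset_empty, ← hdisj k (hKI k (hT1mem k hk).1).1]
          exact Finset.inter_subset_inter (Finset.erase_subset _ _) (Finset.erase_subset _ _)
        · intro k hk l hl hne
          obtain ⟨hkK, hkx⟩ := hT1mem k hk
          obtain ⟨hlK, hlx⟩ := hT1mem l hl
          have hcard := hone k (hKI k hkK).1 l (hKI l hlK).1 hne
          obtain ⟨w, hw⟩ := Finset.card_pos.mp (by omega : 0 < (A k ∩ B l).card)
          rw [Finset.mem_inter] at hw
          refine ⟨w, Finset.mem_inter.mpr ⟨Finset.mem_erase.mpr ⟨?_, hw.1⟩,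
            Finset.mem_erase.mpr ⟨?_, hw.2⟩⟩⟩
          · exact fun h => (hfacts l hlK).2.2.2.1 (h ▸ hw.2)
          · exact fun h => (hT1facts k hkK hkx).2.2.2.2.2.2 (h ▸ hw.1)
      -- pointwise ratio on T1f : factor 3
      have hpoint1 : ∀ k ∈ T1f, (1 : ℚ) / (((A k).card + (B k).card).choose (A k).card)
          ≤ 1 / 3 * ((1 : ℚ) /
            ((((A k).erase b).card + ((B k).erase a).card).choose ((A k).erase b).card)) := by
        intro k hk
        obtain ⟨hkK, hkx⟩ := hT1mem k hk
        obtain ⟨hbA, _, _, _, haB, _, _⟩ := hT1facts k hkK hkx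
        set s := ((A k).erase b).card with hs
        set t := ((B k).erase a).card with ht
        have hsA : (A k).card = s + 1 := by
          rw [hs, Finset.card_erase_of_mem hbA]
          have : 0 < (A k).card := Finset.card_pos.mpr ⟨b, hbA⟩
          omega
        have htB : (B k).card = t + 1 := by
          rw [ht, Finset.card_erase_of_mem haB]
          have : 0 < (B k).card := Finset.card_pos.mpr ⟨a, haB⟩
          omega
        have hs1 : 1 ≤ s := hAerase k hkK
        rw [hsA, htB]
        have hR := R3 s t hs1
        have e1 : s + 1 + (t + 1) = s + t + 2 := by omega
        rw [e1]
        have e2 : s + t = s + t := rfl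
        exact term_ratio 3 (by norm_num) (Nat.choose_pos (by omega)) hR
      have hS1 : ∑ k ∈ T1f, (1 : ℚ) / (((A k).card + (B k).card).choose (A k).card) ≤ 1 / 3 := by
        calc ∑ k ∈ T1f, (1 : ℚ) / (((A k).card + (B k).card).choose (A k).card)
            ≤ ∑ k ∈ T1f, 1 / 3 * ((1 : ℚ) /
              ((((A k).erase b).card + ((B k).erase a).card).choose ((A k).erase b).card)) :=
            Finset.sum_le_sum hpoint1
          _ = 1 / 3 * ∑ k ∈ T1f, ((1 : ℚ) /
              ((((A k).erase b).card + ((B k).erase a).card).choose ((A k).erase b).card)) :=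
            (Finset.mul_sum _ _ _).symm
          _ ≤ 1 / 3 * 1 := by
              apply mul_le_mul_of_nonneg_left boll1
              norm_num
          _ = 1 / 3 := by norm_num
      -- BOLL2 : mixed system
      set C2 : ι → Finset α := fun k => if x ∈ B k then (A k).erase b else A k with hC2
      set D2 : ι → Finset α := fun k => if x ∈ B k then ((B k).erase x).erase y else B k with hD2
      have boll2 : ∑ k ∈ K, (1 : ℚ) / (((C2 k).card + (D2 k).card).choose (C2 k).card) ≤ 1 := by
        apply boll
        · intro k hk
          rw [← Finset.subset_empty, ← hdisj k (hKI k hk).1]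
          apply Finset.inter_subset_inter
          · rw [hC2]
            by_cases hkx : x ∈ B k
            · simp only [if_pos hkx]
              exact Finset.erase_subset _ _
            · simp only [if_neg hkx]
              exact Finset.Subset.rfl
          · rw [hD2]
            by_cases hkx : x ∈ B k
            · simp only [if_pos hkx]
              exact (Finset.erase_subset _ _).trans (Finset.erase_subset _ _)
            · simp only [if_neg hkx]
              exact Finset.Subset.rfl
        · intro k hk l hl hne
          have hcard := hone k (hKI k hk).1 l (hKI l hl).1 hne
          obtain ⟨w, hw⟩ := Finset.card_pos.mp (by omega : 0 < (A k ∩ B l).card)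
          rw [Finset.mem_inter] at hw
          refine ⟨w, Finset.mem_inter.mpr ⟨?_, ?_⟩⟩
          · rw [hC2]
            by_cases hkx : x ∈ B k
            · simp only [if_pos hkx]
              refine Finset.mem_erase.mpr ⟨fun h => (hfacts l hl).2.2.2.1 (h ▸ hw.2), hw.1⟩
            · simp only [if_neg hkx]
              exact hw.1
          · rw [hD2]
            by_cases hlx : x ∈ B l
            · simp only [if_pos hlx]
              refine Finset.mem_erase.mpr ⟨fun h => (hfacts k hk).2.2.1 (h ▸ hw.1),
                Finset.mem_erase.mpr ⟨fun h => (hfacts k hk).2.1 (h ▸ hw.1), hw.2⟩⟩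
            · simp only [if_neg hlx]
              exact hw.2
      -- split boll2 over the two filters
      have hsplit : ∑ k ∈ T2f, (1 : ℚ) / (((C2 k).card + (D2 k).card).choose (C2 k).card)
          + ∑ k ∈ T1f, (1 : ℚ) / (((C2 k).card + (D2 k).card).choose (C2 k).card)
          = ∑ k ∈ K, (1 : ℚ) / (((C2 k).card + (D2 k).card).choose (C2 k).card) := by
        rw [hT2f, hT1f]
        exact Finset.sum_filter_add_sum_filter_not K _ _
      have hT1same : ∀ k ∈ T1f, (1 : ℚ) / (((C2 k).card + (D2 k).card).choose (C2 k).card)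
          = (1 : ℚ) / (((A k).card + (B k).card).choose (A k).card) := by
        intro k hk
        obtain ⟨hkK, hkx⟩ := hT1mem k hk
        rw [hC2, hD2]
        simp only [if_neg hkx]
      -- pointwise ratio on T2f : factor 4
      have hpoint2 : ∀ k ∈ T2f, (1 : ℚ) / (((A k).card + (B k).card).choose (A k).card)
          ≤ 1 / 4 * ((1 : ℚ) / (((C2 k).card + (D2 k).card).choose (C2 k).card)) := by
        intro k hk
        obtain ⟨hkK, hkx⟩ := hT2mem k hk
        obtain ⟨hbA, _, _, _, hyB, _⟩ := hT2facts k hkK hkx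
        have hm1 : 1 ≤ ((A k).erase b).card := hAerase k hkK
        obtain ⟨s, hsA⟩ : ∃ s, ((A k).erase b).card = s + 1 :=
          ⟨((A k).erase b).card - 1, by omega⟩
        have hA2 : (A k).card = s + 2 := by
          have h' := Finset.card_erase_of_mem hbA
          have : 0 < (A k).card := Finset.card_pos.mpr ⟨b, hbA⟩
          omega
        have hyB' : y ∈ (B k).erase x := Finset.mem_erase.mpr ⟨hxy.symm, hyB⟩
        obtain ⟨t, htD⟩ : ∃ t, (((B k).erase x).erase y).card = t :=
          ⟨(((B k).erase x).erase y).card, rfl⟩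
        have hB2 : (B k).card = t + 2 := by
          have h1 := Finset.card_erase_of_mem hyB'
          have h2 := Finset.card_erase_of_mem hkx
          have h3 : 0 < (B k).card := Finset.card_pos.mpr ⟨x, hkx⟩
          have h4 : 0 < ((B k).erase x).card := Finset.card_pos.mpr ⟨y, hyB'⟩
          omega
        have hC2k : (C2 k).card = s + 1 := by rw [hC2]; simp only [if_pos hkx]; exact hsA
        have hD2k : (D2 k).card = t := by rw [hD2]; simp only [if_pos hkx]; exact htD
        rw [hA2, hB2, hC2k, hD2k]
        have hR := R4 s t
        have e1 : s + 2 + (t + 2) = s + t + 4 := by omega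
        have e2 : s + 1 + t = s + t + 1 := by omega
        rw [e1, e2]
        exact term_ratio 4 (by norm_num) (Nat.choose_pos (by omega)) hR
      -- final arithmetic
      have hsum : ∑ k ∈ K, (1 : ℚ) / (((A k).card + (B k).card).choose (A k).card)
          = ∑ k ∈ T2f, (1 : ℚ) / (((A k).card + (B k).card).choose (A k).card)
          + ∑ k ∈ T1f, (1 : ℚ) / (((A k).card + (B k).card).choose (A k).card) := by
        rw [hT2f, hT1f]
        exact (Finset.sum_filter_add_sum_filter_not K _ _).symm
      set S1 := ∑ k ∈ T1f, (1 : ℚ) / (((A k).card + (B k).card).choose (A k).card) with hS1d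
      set S2 := ∑ k ∈ T2f, (1 : ℚ) / (((A k).card + (B k).card).choose (A k).card) with hS2d
      set R := ∑ k ∈ T2f, (1 : ℚ) / (((C2 k).card + (D2 k).card).choose (C2 k).card) with hRd
      have hRS1 : R + S1 ≤ 1 := by
        rw [hRd, hS1d]
        calc ∑ k ∈ T2f, (1 : ℚ) / (((C2 k).card + (D2 k).card).choose (C2 k).card)
            + ∑ k ∈ T1f, (1 : ℚ) / (((A k).card + (B k).card).choose (A k).card)
            = ∑ k ∈ T2f, (1 : ℚ) / (((C2 k).card + (D2 k).card).choose (C2 k).card)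
            + ∑ k ∈ T1f, (1 : ℚ) / (((C2 k).card + (D2 k).card).choose (C2 k).card) := by
              rw [Finset.sum_congr rfl hT1same]
          _ = ∑ k ∈ K, (1 : ℚ) / (((C2 k).card + (D2 k).card).choose (C2 k).card) := hsplit
          _ ≤ 1 := boll2
      have hS2R : S2 ≤ 1 / 4 * R := by
        rw [hS2d, hRd]
        calc ∑ k ∈ T2f, (1 : ℚ) / (((A k).card + (B k).card).choose (A k).card)
            ≤ ∑ k ∈ T2f, 1 / 4 * ((1 : ℚ) /
              (((C2 k).card + (D2 k).card).choose (C2 k).card)) := Finset.sum_le_sum hpoint2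
          _ = 1 / 4 * ∑ k ∈ T2f, ((1 : ℚ) /
              (((C2 k).card + (D2 k).card).choose (C2 k).card)) := (Finset.mul_sum _ _ _).symm
      have hRnonneg : 0 ≤ R := by
        rw [hRd]
        apply Finset.sum_nonneg
        intro k hk
        positivity
      rw [hsum]
      linarith [hS1, hS2R, hRS1, hRnonneg]
    · -- CASE 2 : all k have x ∈ B k
      push_neg at hT1
      have hboll : ∑ k ∈ K, (1 : ℚ) /
          ((((A k).erase b).card + (((B k).erase x).erase y).card).choose
            ((A k).erase b).card) ≤ 1 := by
        apply boll
        · intro k hk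
          rw [← Finset.subset_empty, ← hdisj k (hKI k hk).1]
          exact Finset.inter_subset_inter (Finset.erase_subset _ _)
            ((Finset.erase_subset _ _).trans (Finset.erase_subset _ _))
        · intro k hk l hl hne
          have hcard := hone k (hKI k hk).1 l (hKI l hl).1 hne
          obtain ⟨w, hw⟩ := Finset.card_pos.mp (by omega : 0 < (A k ∩ B l).card)
          rw [Finset.mem_inter] at hw
          refine ⟨w, Finset.mem_inter.mpr ⟨Finset.mem_erase.mpr
            ⟨fun h => (hfacts l hl).2.2.2.1 (h ▸ hw.2), hw.1⟩,
            Finset.mem_erase.mpr ⟨fun h => (hfacts k hk).2.2.1 (h ▸ hw.1),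
              Finset.mem_erase.mpr ⟨fun h => (hfacts k hk).2.1 (h ▸ hw.1), hw.2⟩⟩⟩⟩
      have hpoint : ∀ k ∈ K, (1 : ℚ) / (((A k).card + (B k).card).choose (A k).card)
          ≤ 1 / 3 * ((1 : ℚ) /
            ((((A k).erase b).card + (((B k).erase x).erase y).card).choose
              ((A k).erase b).card)) := by
        intro k hk
        obtain ⟨hbA, _, _, _, hor⟩ := hfacts k hk
        have hkx : x ∈ B k := hT1 k hk
        have hyB : y ∈ B k := by
          rcases hor with ⟨_, hyB, _⟩ | ⟨_, hxB, _, _⟩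
          · exact hyB
          · exact absurd hkx hxB
        set s := ((A k).erase b).card with hs
        have hsA : (A k).card = s + 1 := by
          rw [hs, Finset.card_erase_of_mem hbA]
          have : 0 < (A k).card := Finset.card_pos.mpr ⟨b, hbA⟩
          omega
        have hyB' : y ∈ (B k).erase x := Finset.mem_erase.mpr ⟨hxy.symm, hyB⟩
        set t := (((B k).erase x).erase y).card with ht
        have hB2 : (B k).card = t + 2 := by
          have h1 := Finset.card_erase_of_mem hyB'
          have h2 := Finset.card_erase_of_mem hkx
          have h4 : 0 < ((B k).erase x).card := Finset.card_pos.mpr ⟨y, hyB'⟩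
          omega
        rw [hsA, hB2]
        have hR := R3' s t
        have e1 : s + 1 + (t + 2) = s + t + 3 := by omega
        rw [e1]
        exact term_ratio 3 (by norm_num) (Nat.choose_pos (by omega)) hR
      calc ∑ k ∈ K, (1 : ℚ) / (((A k).card + (B k).card).choose (A k).card)
          ≤ ∑ k ∈ K, 1 / 3 * ((1 : ℚ) /
            ((((A k).erase b).card + (((B k).erase x).erase y).card).choose
              ((A k).erase b).card)) := Finset.sum_le_sum hpoint
        _ = 1 / 3 * ∑ k ∈ K, ((1 : ℚ) /
            ((((A k).erase b).card + (((B k).erase x).erase y).card).choose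
              ((A k).erase b).card)) := (Finset.mul_sum _ _ _).symm
        _ ≤ 1 / 3 * 1 := by
            apply mul_le_mul_of_nonneg_left hboll
            norm_num
        _ ≤ 1 / 2 := by norm_num
  · -- CASE 1 : no k has x ∈ B k
    push_neg at hT2
    have hT1all : ∀ k ∈ K, a ∈ B k ∧ a ∉ A k := by
      intro k hk
      obtain ⟨_, _, _, _, hor⟩ := hfacts k hk
      rcases hor with ⟨hxB, _, _⟩ | ⟨haB, _, _, haA⟩
      · exact absurd hxB (hT2 k hk)
      · exact ⟨haB, haA⟩
    have hboll : ∑ k ∈ K, (1 : ℚ) /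
        ((((A k).erase b).card + ((B k).erase a).card).choose ((A k).erase b).card) ≤ 1 := by
      apply boll
      · intro k hk
        rw [← Finset.subset_empty, ← hdisj k (hKI k hk).1]
        exact Finset.inter_subset_inter (Finset.erase_subset _ _) (Finset.erase_subset _ _)
      · intro k hk l hl hne
        have hcard := hone k (hKI k hk).1 l (hKI l hl).1 hne
        obtain ⟨w, hw⟩ := Finset.card_pos.mp (by omega : 0 < (A k ∩ B l).card)
        rw [Finset.mem_inter] at hw
        refine ⟨w, Finset.mem_inter.mpr ⟨Finset.mem_erase.mpr
          ⟨fun h => (hfacts l hl).2.2.2.1 (h ▸ hw.2), hw.1⟩,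
          Finset.mem_erase.mpr ⟨fun h => (hT1all k hk).2 (h ▸ hw.1), hw.2⟩⟩⟩
    have hpoint : ∀ k ∈ K, (1 : ℚ) / (((A k).card + (B k).card).choose (A k).card)
        ≤ 1 / 2 * ((1 : ℚ) /
          ((((A k).erase b).card + ((B k).erase a).card).choose ((A k).erase b).card)) := by
      intro k hk
      obtain ⟨hbA, _, _, _, _⟩ := hfacts k hk
      obtain ⟨haB, _⟩ := hT1all k hk
      set s := ((A k).erase b).card with hs
      set t := ((B k).erase a).card with ht
      have hsA : (A k).card = s + 1 := by
        rw [hs, Finset.card_erase_of_mem hbA]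
        have : 0 < (A k).card := Finset.card_pos.mpr ⟨b, hbA⟩
        omega
      have htB : (B k).card = t + 1 := by
        rw [ht, Finset.card_erase_of_mem haB]
        have : 0 < (B k).card := Finset.card_pos.mpr ⟨a, haB⟩
        omega
      rw [hsA, htB]
      have hR := R2 s t
      have e1 : s + 1 + (t + 1) = s + t + 2 := by omega
      rw [e1]
      exact term_ratio 2 (by norm_num) (Nat.choose_pos (by omega)) hR
    calc ∑ k ∈ K, (1 : ℚ) / (((A k).card + (B k).card).choose (A k).card)
        ≤ ∑ k ∈ K, 1 / 2 * ((1 : ℚ) /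
          ((((A k).erase b).card + ((B k).erase a).card).choose ((A k).erase b).card)) :=
          Finset.sum_le_sum hpoint
      _ = 1 / 2 * ∑ k ∈ K, ((1 : ℚ) /
          ((((A k).erase b).card + ((B k).erase a).card).choose ((A k).erase b).card)) :=
          (Finset.mul_sum _ _ _).symm
      _ ≤ 1 / 2 * 1 := by
          apply mul_le_mul_of_nonneg_left hboll
          norm_num
      _ = 1 / 2 := by norm_num
theorem stmt_12 {α : Type*} [DecidableEq α] {ι : Type*} (I : Finset ι)
    (A B : ι → Finset α)
    (hdisj : ∀ i ∈ I, A i ∩ B i = ∅)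
    (hone : ∀ i ∈ I, ∀ j ∈ I, i ≠ j → (A i ∩ B j).card = 1)
    (i j : ι) (hi : i ∈ I) (hj : j ∈ I) (hij : i ≠ j)
    (hAi : (A i).card = 2) (hAj : (A j).card = 2) (hAint : (A i ∩ A j).Nonempty)
    (hBi : (B i).card = 2) (hBj : (B j).card = 2) (hBint : (B i ∩ B j).Nonempty) :
    ∑ k ∈ I, (1 : ℚ) / (((A k).card + (B k).card).choose (A k).card) ≤ 5 / 6 := by
  classical
  have hmemAB : ∀ k ∈ I, ∀ w, w ∈ A k → w ∉ B k := by
    intro k hk w hw hw'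
    have hmem : w ∈ A k ∩ B k := Finset.mem_inter.mpr ⟨hw, hw'⟩
    rw [hdisj k hk] at hmem
    exact absurd hmem (Finset.notMem_empty w)
  obtain ⟨a, haij⟩ := hAint
  rw [Finset.mem_inter] at haij
  obtain ⟨x, hxa, hAieq⟩ := pair_mem_other hAi haij.1
  obtain ⟨y, hya, hAjeq⟩ := pair_mem_other hAj haij.2
  have hxy : x ≠ y := by
    intro h
    subst h
    have hAeq : A j = A i := by rw [hAieq, hAjeq]
    have h1 := hone j hj i hi hij.symm
    obtain ⟨w, hw⟩ := Finset.card_pos.mp (by omega : 0 < (A j ∩ B i).card)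
    rw [Finset.mem_inter, hAeq] at hw
    exact hmemAB i hi w hw.1 hw.2
  obtain ⟨b, hbij⟩ := hBint
  rw [Finset.mem_inter] at hbij
  -- y ∈ B i
  have hyBi : y ∈ B i := by
    have h1 := hone j hj i hi hij.symm
    obtain ⟨w, hw⟩ := Finset.card_pos.mp (by omega : 0 < (A j ∩ B i).card)
    rw [Finset.mem_inter] at hw
    have hwa : w ≠ a := by
      intro h
      subst h
      exact hmemAB i hi w haij.1 hw.2
    have : w = y := by
      have := hw.1
      rw [hAjeq] at this
      rcases Finset.mem_insert.mp this with h | h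
      · exact absurd h hwa
      · exact Finset.mem_singleton.mp h
    exact this ▸ hw.2
  have hxBj : x ∈ B j := by
    have h1 := hone i hi j hj hij
    obtain ⟨w, hw⟩ := Finset.card_pos.mp (by omega : 0 < (A i ∩ B j).card)
    rw [Finset.mem_inter] at hw
    have hwa : w ≠ a := by
      intro h
      subst h
      exact hmemAB j hj w haij.2 hw.2
    have : w = x := by
      have := hw.1
      rw [hAieq] at this
      rcases Finset.mem_insert.mp this with h | h
      · exact absurd h hwa
      · exact Finset.mem_singleton.mp h
    exact this ▸ hw.2
  have hyb : y ≠ b := by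
    intro h
    subst h
    exact hmemAB j hj y (by rw [hAjeq]; exact Finset.mem_insert_of_mem (Finset.mem_singleton_self _)) hbij.2
  have hxb : x ≠ b := by
    intro h
    subst h
    exact hmemAB i hi x (by rw [hAieq]; exact Finset.mem_insert_of_mem (Finset.mem_singleton_self _)) hbij.1
  have hab : a ≠ b := by
    intro h
    subst h
    exact hmemAB i hi a haij.1 hbij.1
  have hBieq : B i = {y, b} := eq_pair_of_mem hBi hyBi hbij.1 hyb
  have hBjeq : B j = {x, b} := eq_pair_of_mem hBj hxBj hbij.2 hxb
  have hax : a ≠ x := hxa.symm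
  have hay : a ≠ y := hya.symm
  -- split the sum
  set f : ι → ℚ := fun k => (1 : ℚ) / (((A k).card + (B k).card).choose (A k).card) with hf
  have hjei : j ∈ I.erase i := Finset.mem_erase.mpr ⟨hij.symm, hj⟩
  have hsplit1 : ∑ k ∈ I, f k = f i + ∑ k ∈ I.erase i, f k := (Finset.add_sum_erase I f hi).symm
  have hsplit2 : ∑ k ∈ I.erase i, f k = f j + ∑ k ∈ (I.erase i).erase j, f k :=
    (Finset.add_sum_erase (I.erase i) f hjei).symm
  have hfi : f i = 1 / 6 := by
    show (1 : ℚ) / (((A i).card + (B i).card).choose (A i).card) = 1 / 6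
    rw [hAi, hBi]
    norm_num [Nat.choose]
  have hfj : f j = 1 / 6 := by
    show (1 : ℚ) / (((A j).card + (B j).card).choose (A j).card) = 1 / 6
    rw [hAj, hBj]
    norm_num [Nat.choose]
  have hKbound : ∑ k ∈ (I.erase i).erase j, f k ≤ 1 / 2 := by
    by_cases hcase : ∃ k ∈ (I.erase i).erase j, x ∈ A k ∧ y ∈ A k
    · -- mirror case : apply key_half to the swapped system
      obtain ⟨l, hlK, hlxy⟩ := hcase
      have hlI : l ∈ I := Finset.mem_of_mem_erase (Finset.mem_of_mem_erase hlK)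
      have hno2 : ∀ k ∈ (I.erase i).erase j, ¬ (x ∈ B k ∧ y ∈ B k) := by
        intro k hk hxyB
        have hkI : k ∈ I := Finset.mem_of_mem_erase (Finset.mem_of_mem_erase hk)
        have hkl : l ≠ k := by
          intro h
          subst h
          exact hmemAB l hlI x hlxy.1 hxyB.1
        have hcard := hone l hlI k hkI hkl
        have hsub : ({x, y} : Finset α) ⊆ A l ∩ B k := by
          intro w hw
          rcases Finset.mem_insert.mp hw with rfl | hw
          · exact Finset.mem_inter.mpr ⟨hlxy.1, hxyB.1⟩
          · rw [Finset.mem_singleton] at hw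
            subst hw
            exact Finset.mem_inter.mpr ⟨hlxy.2, hxyB.2⟩
        have := Finset.card_le_card hsub
        rw [Finset.card_pair hxy, hcard] at this
        omega
      have hswap := key_half I B A i j b y x a
        (fun k hk => by rw [Finset.inter_comm]; exact hdisj k hk)
        (fun k hk l' hl' hne => by
          rw [Finset.inter_comm]; exact hone l' hl' k hk (fun h => hne h.symm))
        hi hj
        (by rw [hBieq]; exact Finset.pair_comm y b)
        (by rw [hBjeq]; exact Finset.pair_comm x b)
        (by rw [hAieq]; exact Finset.pair_comm a x)
        (by rw [hAjeq]; exact Finset.pair_comm a y)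
        hyb.symm hxb.symm hxy.symm hab.symm hay.symm hax.symm
        (fun k hk h => hno2 k hk ⟨h.2, h.1⟩)
      calc ∑ k ∈ (I.erase i).erase j, f k
          = ∑ k ∈ (I.erase i).erase j,
            (1 : ℚ) / (((B k).card + (A k).card).choose (B k).card) := by
            apply Finset.sum_congr rfl
            intro k _
            show (1 : ℚ) / (((A k).card + (B k).card).choose (A k).card)
              = (1 : ℚ) / (((B k).card + (A k).card).choose (B k).card)
            have h1 : ((A k).card + (B k).card).choose (A k).card
                = ((B k).card + (A k).card).choose (B k).card := by
              rw [Nat.add_comm ((A k).card) ((B k).card)]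
              exact Nat.choose_symm_add.symm
            rw [h1]
        _ ≤ 1 / 2 := hswap
    · push_neg at hcase
      exact key_half I A B i j a x y b hdisj hone hi hj hAieq hAjeq hBieq hBjeq
        hax hay hxy hab hxb hyb (fun k hk h => hcase k hk h.1 h.2)
  calc ∑ k ∈ I, f k = f i + (f j + ∑ k ∈ (I.erase i).erase j, f k) := by rw [hsplit1, hsplit2]
    _ ≤ 1 / 6 + (1 / 6 + 1 / 2) := by
        rw [hfi, hfj]
        linarith [hKbound]
    _ = 5 / 6 := by norm_num
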